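/- Let d be a positive integer, G a finite group, F a GCA on G^{Z^d}, and let μ be the Haar probability measure on the compact topological group G^{Z^d} (equivalently, the infinite product over Z^d of the uniform probability measure on G), defined on the Borel σ-algebra. Then F is topologically transitive if and only if F is ergodic with respect to μ (in particular, F is μ-measure-preserving). -/

import Mathlib

open MeasureTheory
open scoped ENNReal

set_option maxHeartbeats 1000000

/-- A self-map `T` of a topological space `X` is topologically transitive if for all
nonempty open sets `U, V ⊆ X` there exists `n ≥ 0` with `T^n(U) ∩ V ≠ ∅`. -/
def TopologicallyTransitive {X : Type*} [TopologicalSpace X] (T : X → X) : Prop :=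
  ∀ U V : Set X, IsOpen U → IsOpen V → U.Nonempty → V.Nonempty →
    ∃ n : ℕ, (T^[n] '' U ∩ V).Nonempty

section AuxStmt10

open Set Function

/-- The pushforward of a left-invariant probability measure under a surjective
multiplicative map onto a finite group is the uniform measure. -/
private lemma stmt10_uniform_fiber {X P : Type*} [Group X] [MeasurableSpace X] (μ : Measure X)
    [IsProbabilityMeasure μ]
    (hinv : ∀ (g : X) (s : Set X), μ ((fun x => g * x) ⁻¹' s) = μ s)
    [Group P] [Fintype P] (ψ : X → P)
    (hψ : ∀ a b : X, ψ (a * b) = ψ a * ψ b)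
    (hsurj : Function.Surjective ψ)
    (hmeas : ∀ p : P, MeasurableSet (ψ ⁻¹' {p}))
    (T : Finset P) :
    μ (ψ ⁻¹' ↑T) = (T.card : ℝ≥0∞) * (Fintype.card P : ℝ≥0∞)⁻¹ := by
  classical
  have key : ∀ p : P, μ (ψ ⁻¹' {p}) = μ (ψ ⁻¹' {1}) := by
    intro p
    obtain ⟨g, hg⟩ := hsurj p⁻¹
    have hset : ψ ⁻¹' {p} = (fun x => g * x) ⁻¹' (ψ ⁻¹' {1}) := by
      ext x
      simp only [Set.mem_preimage, Set.mem_singleton_iff, hψ, hg, inv_mul_eq_one]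
      exact eq_comm
    rw [hset, hinv]
  have hsum : ∀ T : Finset P, μ (ψ ⁻¹' ↑T) = (T.card : ℝ≥0∞) * μ (ψ ⁻¹' {1}) := by
    intro T
    have hU : ψ ⁻¹' (↑T : Set P) = ⋃ p ∈ T, ψ ⁻¹' {p} := by
      ext x; simp
    have hdisj : (↑T : Set P).PairwiseDisjoint (fun p => ψ ⁻¹' {p}) := by
      intro p _ q _ hpq
      apply Set.disjoint_left.mpr
      intro x hxp hxq
      exact hpq (by
        simp only [Set.mem_preimage, Set.mem_singleton_iff] at hxp hxq
        rw [← hxp, ← hxq])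
    rw [hU, measure_biUnion_finset hdisj (fun p _ => hmeas p)]
    rw [Finset.sum_congr rfl (fun p _ => key p), Finset.sum_const, nsmul_eq_mul]
  have huniv : (Fintype.card P : ℝ≥0∞) * μ (ψ ⁻¹' {1}) = 1 := by
    have h := hsum Finset.univ
    simp only [Finset.coe_univ, Set.preimage_univ, measure_univ, Finset.card_univ] at h
    exact h.symm
  have hc0 : (Fintype.card P : ℝ≥0∞) ≠ 0 := by
    simp [Fintype.card_ne_zero]
  have hcT : (Fintype.card P : ℝ≥0∞) ≠ ⊤ := by simp
  have hone : μ (ψ ⁻¹' {1}) = (Fintype.card P : ℝ≥0∞)⁻¹ := by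
    calc μ (ψ ⁻¹' {1})
        = (Fintype.card P : ℝ≥0∞)⁻¹ * ((Fintype.card P : ℝ≥0∞) * μ (ψ ⁻¹' {1})) := by
          rw [← mul_assoc, ENNReal.inv_mul_cancel hc0 hcT, one_mul]
      _ = (Fintype.card P : ℝ≥0∞)⁻¹ := by rw [huniv, mul_one]
  rw [hsum T, hone]

end AuxStmt10

theorem stmt10 (d : ℕ) (hd : 0 < d) (G : Type*) [Group G] [Finite G]
    [TopologicalSpace G] [DiscreteTopology G]
    [MeasurableSpace ((Fin d → ℤ) → G)] [BorelSpace ((Fin d → ℤ) → G)]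
    (F : ((Fin d → ℤ) → G) → ((Fin d → ℤ) → G))
    (hFcont : Continuous F)
    (hFhom : ∀ a b : (Fin d → ℤ) → G, F (a * b) = F a * F b)
    (hFshift : ∀ (u : Fin d → ℤ) (c : (Fin d → ℤ) → G),
      F (fun v => c (v + u)) = fun v => F c (v + u))
    (μ : Measure ((Fin d → ℤ) → G))
    (hμ : μ.IsHaarMeasure) (hμprob : IsProbabilityMeasure μ) :
    TopologicallyTransitive F ↔
      (MeasurePreserving F μ μ ∧
        ∀ A : Set ((Fin d → ℤ) → G), MeasurableSet A →
          μ (symmDiff (F ⁻¹' A) A) = 0 → μ A = 0 ∨ μ A = 1) := by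
  classical
  letI : MeasurableSpace G := ⊤
  haveI : DiscreteMeasurableSpace G := ⟨fun _ => MeasurableSpace.measurableSet_top⟩
  haveI : BorelSpace G := DiscreteMeasurableSpace.toBorelSpace
  haveI := Fintype.ofFinite G
  haveI := hμprob
  haveI := hμ.toIsMulLeftInvariant
  haveI := hμ.toIsOpenPosMeasure
  have hFmeas : Measurable F := hFcont.measurable
  -- basic facts about iterates
  have hiter_cont : ∀ n : ℕ, Continuous (F^[n]) := fun n => hFcont.iterate n
  have hiter_meas : ∀ n : ℕ, Measurable (F^[n]) := fun n => (hiter_cont n).measurable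
  have hiter_hom : ∀ (n : ℕ) (a b : (Fin d → ℤ) → G),
      F^[n] (a * b) = F^[n] a * F^[n] b := by
    intro n
    induction n with
    | zero => intro a b; simp
    | succ n ih =>
        intro a b
        rw [Function.iterate_succ_apply, Function.iterate_succ_apply,
          Function.iterate_succ_apply, hFhom, ih]
  have hiter_shift : ∀ (n : ℕ) (u : Fin d → ℤ) (c : (Fin d → ℤ) → G),
      F^[n] (fun v => c (v + u)) = fun v => F^[n] c (v + u) := by
    intro n
    induction n with
    | zero => intro u c; simp
    | succ n ih =>
        intro u c
        rw [Function.iterate_succ_apply, Function.iterate_succ_apply, hFshift u c, ih]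
  have hinv : ∀ (g : (Fin d → ℤ) → G) (s : Set ((Fin d → ℤ) → G)),
      μ ((fun x => g * x) ⁻¹' s) = μ s := fun g s => measure_preimage_mul μ g s
  -- identification of the measurable space with the product σ-algebra
  have hMeq : ‹MeasurableSpace ((Fin d → ℤ) → G)› =
      (MeasurableSpace.pi : MeasurableSpace ((Fin d → ℤ) → G)) := by
    rw [BorelSpace.measurable_eq (α := (Fin d → ℤ) → G)]
    exact (Pi.borelSpace (X := fun _ : Fin d → ℤ => G)).measurable_eq.symm
  have hgen : ‹MeasurableSpace ((Fin d → ℤ) → G)› =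
      MeasurableSpace.generateFrom (measurableCylinders (fun _ : Fin d → ℤ => G)) :=
    hMeq.trans generateFrom_measurableCylinders.symm
  have halg : IsSetAlgebra (measurableCylinders (fun _ : Fin d → ℤ => G)) :=
    ⟨empty_mem_measurableCylinders _, fun _ hs => compl_mem_measurableCylinders hs,
      fun _ _ hs ht => union_mem_measurableCylinders hs ht⟩
  have hdense := Measure.MeasureDense.of_generateFrom_isSetAlgebra_finite (μ := μ) halg hgen
  -- surjectivity of restriction maps
  have hres_surj : ∀ (I : Finset (Fin d → ℤ)) (p : ↥I → G),
      ∃ x : (Fin d → ℤ) → G, I.restrict x = p := by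
    intro I p
    refine ⟨fun v => if h : v ∈ I then p ⟨v, h⟩ else 1, ?_⟩
    funext v
    simp only [Finset.restrict]
    rw [dif_pos v.2]
  -- measurability of fibers of window observation maps
  have hfibm : ∀ (I : Finset (Fin d → ℤ)) (n : ℕ) (p : ↥I → G),
      MeasurableSet ((fun x => I.restrict (F^[n] x)) ⁻¹' {p}) := by
    intro I n p
    have hs : (fun x => I.restrict (F^[n] x)) ⁻¹' {p}
        = ⋂ v : ↥I, (fun x : (Fin d → ℤ) → G => F^[n] x ↑v) ⁻¹' {p v} := by
      ext x
      simp [funext_iff, Finset.restrict]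
    rw [hs]
    exact MeasurableSet.iInter fun v =>
      ((isOpen_discrete _).preimage ((continuous_apply ((v : Fin d → ℤ))).comp
        (hiter_cont n))).measurableSet
  have hcylmeas : ∀ (I : Finset (Fin d → ℤ)) (n : ℕ) (S : Set (↥I → G)),
      MeasurableSet ((fun x => I.restrict (F^[n] x)) ⁻¹' S) := by
    intro I n S
    have hs : (fun x => I.restrict (F^[n] x)) ⁻¹' S
        = ⋃ p ∈ S, (fun x => I.restrict (F^[n] x)) ⁻¹' {p} := by
      ext x; simp
    rw [hs]
    exact MeasurableSet.biUnion S.to_countable (fun p _ => hfibm I n p)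
  have hcyl_eq : ∀ (I : Finset (Fin d → ℤ)) (S : Set (↥I → G)),
      cylinder (α := fun _ : Fin d → ℤ => G) I S
        = (fun x : (Fin d → ℤ) → G => I.restrict (F^[0] x)) ⁻¹' S := by
    intro I S
    simp only [Function.iterate_zero_apply]
    rfl
  have hmsd : ∀ {s t : Set ((Fin d → ℤ) → G)}, MeasurableSet s → MeasurableSet t →
      MeasurableSet (symmDiff s t) := by
    intro s t hs ht
    rw [Set.symmDiff_def]
    exact (hs.diff ht).union (ht.diff hs)
  have hle_sym : ∀ s t : Set ((Fin d → ℤ) → G), μ s ≤ μ t + μ (symmDiff s t) := by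
    intro s t
    refine le_trans (measure_mono ?_) (measure_union_le _ _)
    intro x hx
    by_cases h : x ∈ t
    · exact Or.inl h
    · exact Or.inr (Set.mem_symmDiff.2 (Or.inl ⟨hx, h⟩))
  have hopenfib : ∀ (w : Fin d → ℤ) (g : G), IsOpen {z : (Fin d → ℤ) → G | z w = g} := by
    intro w g
    have h : {z : (Fin d → ℤ) → G | z w = g} = (fun z : (Fin d → ℤ) → G => z w) ⁻¹' {g} := rfl
    rw [h]
    exact (isOpen_discrete _).preimage (continuous_apply w)
  constructor
  · -- transitive → measure preserving and ergodic
    intro htrans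
    -- Step 1 : F is surjective
    have hsurj : Function.Surjective F := by
      by_contra hns
      unfold Function.Surjective at hns
      push_neg at hns
      obtain ⟨y, hy⟩ := hns
      have hyr : y ∉ Set.range F := by
        rintro ⟨x, rfl⟩; exact hy x rfl
      have hopen : IsOpen (Set.range F)ᶜ := (isCompact_range hFcont).isClosed.isOpen_compl
      obtain ⟨J, uu, huu, hsub⟩ := isOpen_pi_iff.1 hopen y hyr
      set V : Set ((Fin d → ℤ) → G) := ⋂ v ∈ J, {z | z v = y v} with hVdef
      have hVsub : V ⊆ (Set.range F)ᶜ := by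
        intro z hz
        apply hsub
        intro v hv
        have hzv : z v = y v := by
          simp only [hVdef, Set.mem_iInter] at hz
          exact hz v hv
        rw [hzv]
        exact (huu v hv).2
      have hF1 : F 1 = 1 := by
        have h := hFhom 1 1
        rw [mul_one] at h
        exact (mul_eq_left.mp h.symm)
      have hy1 : ∃ v ∈ J, y v ≠ 1 := by
        by_contra hall
        push_neg at hall
        have h1V : (1 : (Fin d → ℤ) → G) ∈ V := by
          simp only [hVdef, Set.mem_iInter]
          intro v hv
          simp [hall v hv]
        exact hVsub h1V ⟨1, hF1⟩
      obtain ⟨v0, hv0J, hv0⟩ := hy1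
      set U : Set ((Fin d → ℤ) → G) := ⋂ v ∈ J, {z | z v = 1} with hUdef
      have hUopen : IsOpen U := isOpen_biInter_finset fun v _ => hopenfib v 1
      have hVopen : IsOpen V := isOpen_biInter_finset fun v _ => hopenfib v (y v)
      have hUne : U.Nonempty := ⟨1, by simp [hUdef]⟩
      have hVne : V.Nonempty := ⟨y, by simp [hVdef]⟩
      obtain ⟨n, yy, ⟨x, hxU, rfl⟩, hyyV⟩ := htrans U V hUopen hVopen hUne hVne
      cases n with
      | zero =>
          simp only [Function.iterate_zero_apply] at hyyV
          have h1 : x v0 = 1 := by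
            simp only [hUdef, Set.mem_iInter] at hxU
            exact hxU v0 hv0J
          have h2 : x v0 = y v0 := by
            simp only [hVdef, Set.mem_iInter] at hyyV
            exact hyyV v0 hv0J
          exact hv0 (h2.symm.trans h1)
      | succ n =>
          exact hVsub hyyV ⟨F^[n] x, (Function.iterate_succ_apply' F n x).symm⟩
    -- uniform measure of window observations
    have hwind_hom : ∀ (I : Finset (Fin d → ℤ)) (n : ℕ) (a b : (Fin d → ℤ) → G),
        I.restrict (F^[n] (a * b)) = I.restrict (F^[n] a) * I.restrict (F^[n] b) := by
      intro I n a b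
      rw [hiter_hom n a b]
      rfl
    have hwind_surj : ∀ (I : Finset (Fin d → ℤ)) (n : ℕ),
        Function.Surjective (fun x : (Fin d → ℤ) → G => I.restrict (F^[n] x)) := by
      intro I n p
      obtain ⟨x0, hx0⟩ := hres_surj I p
      obtain ⟨w, rfl⟩ := (hsurj.iterate n) x0
      exact ⟨w, hx0⟩
    have cylVal : ∀ (I : Finset (Fin d → ℤ)) (n : ℕ) (S : Set (↥I → G)),
        μ ((fun x => I.restrict (F^[n] x)) ⁻¹' S)
          = (((Set.toFinite S).toFinset.card : ℝ≥0∞)) * ((Fintype.card (↥I → G) : ℝ≥0∞))⁻¹ := by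
      intro I n S
      conv_lhs => rw [← (Set.toFinite S).coe_toFinset]
      exact stmt10_uniform_fiber μ hinv _ (hwind_hom I n) (hwind_surj I n)
        (hfibm I n) ((Set.toFinite S).toFinset)
    -- Step 2 : F is measure preserving
    have hmap : Measure.map F μ = μ := by
      haveI : IsProbabilityMeasure (Measure.map F μ) :=
        Measure.isProbabilityMeasure_map hFmeas.aemeasurable
      refine ext_of_generate_finite (measurableCylinders (fun _ : Fin d → ℤ => G))
        hgen isPiSystem_measurableCylinders ?_ (by simp)
      intro t ht
      obtain ⟨I, S, _, rfl⟩ := (mem_measurableCylinders t).1 ht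
      have htm : MeasurableSet (cylinder (α := fun _ : Fin d → ℤ => G) I S) := by
        rw [hcyl_eq I S]; exact hcylmeas I 0 S
      rw [Measure.map_apply hFmeas htm]
      have h1 : F ⁻¹' cylinder (α := fun _ : Fin d → ℤ => G) I S
          = (fun x : (Fin d → ℤ) → G => I.restrict (F^[1] x)) ⁻¹' S := by
        simp only [Function.iterate_one]
        rfl
      rw [h1, hcyl_eq I S, cylVal, cylVal]
    have hmp : MeasurePreserving F μ μ := ⟨hFmeas, hmap⟩
    refine ⟨hmp, ?_⟩
    -- Step 3 : ergodicity
    -- Key combinatorial lemma from transitivity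
    have key : ∀ I : Finset (Fin d → ℤ), ∃ n : ℕ, ∀ p : ↥I → G,
        ∃ z : (Fin d → ℤ) → G, (∀ v : ↥I, z ↑v = p v) ∧ (∀ v : ↥I, F^[n] z ↑v = 1) := by
      intro I
      set i0 : Fin d := ⟨0, hd⟩ with hi0
      obtain ⟨B, hbound⟩ : ∃ B : ℕ, ∀ v : ↥I, (((v : Fin d → ℤ)) i0).natAbs ≤ B :=
        ⟨I.sup (fun w => (w i0).natAbs),
          fun v => Finset.le_sup (f := fun w : Fin d → ℤ => (w i0).natAbs) v.2⟩
      have habs : ∀ v : ↥I, |(v : Fin d → ℤ) i0| ≤ (B : ℤ) := by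
        intro v
        rw [Int.abs_eq_natAbs]
        exact_mod_cast hbound v
      obtain ⟨en, hen⟩ : ∃ en : (↥I → G) → ℕ, Function.Injective en :=
        ⟨fun p => (Fintype.equivFin (↥I → G) p : ℕ),
          fun p q h => (Fintype.equivFin (↥I → G)).injective (Fin.val_injective h)⟩
      obtain ⟨u, husep⟩ : ∃ u : (↥I → G) → (Fin d → ℤ),
          ∀ p q : ↥I → G, ∀ a b : ℤ, |a| ≤ (B : ℤ) → |b| ≤ (B : ℤ) →
            a + u p i0 = b + u q i0 → p = q := by
        refine ⟨fun p i => if i = i0 then (2 * (B : ℤ) + 1) * (en p : ℤ) else 0, ?_⟩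
        intro p q a b ha hb h
        have h' : a + (2 * (B : ℤ) + 1) * (en p : ℤ)
            = b + (2 * (B : ℤ) + 1) * (en q : ℤ) := by simpa using h
        have h1 := abs_le.mp ha
        have h2 := abs_le.mp hb
        have hpq : ((en p : ℕ) : ℤ) = ((en q : ℕ) : ℤ) := by
          rcases lt_trichotomy ((en p : ℕ) : ℤ) ((en q : ℕ) : ℤ) with hlt | heq' | hgt
          · exfalso
            have hge1 : (1 : ℤ) ≤ ((en q : ℕ) : ℤ) - ((en p : ℕ) : ℤ) := by omega
            have hK : (0 : ℤ) ≤ 2 * (B : ℤ) + 1 := by positivity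
            have hKK := mul_le_mul_of_nonneg_left hge1 hK
            nlinarith [h1.1, h1.2, h2.1, h2.2]
          · exact heq'
          · exfalso
            have hge1 : (1 : ℤ) ≤ ((en p : ℕ) : ℤ) - ((en q : ℕ) : ℤ) := by omega
            have hK : (0 : ℤ) ≤ 2 * (B : ℤ) + 1 := by positivity
            have hKK := mul_le_mul_of_nonneg_left hge1 hK
            nlinarith [h1.1, h1.2, h2.1, h2.2]
        exact hen (by exact_mod_cast hpq)
      set dec : ((↥I → G) × ↥I) → (Fin d → ℤ) := fun pv => (pv.2 : Fin d → ℤ) + u pv.1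
        with hdec
      have hinj : Function.Injective dec := by
        rintro ⟨p, v⟩ ⟨q, w⟩ h
        have h0 := congrFun h i0
        simp only [hdec, Pi.add_apply] at h0
        have hpq : p = q := husep p q _ _ (habs v) (habs w) h0
        subst hpq
        have hvw : (v : Fin d → ℤ) = (w : Fin d → ℤ) := by
          have hh : (v : Fin d → ℤ) + u p = (w : Fin d → ℤ) + u p := h
          exact add_right_cancel hh
        have : v = w := Subtype.ext hvw
        subst this
        rfl
      set xc : (Fin d → ℤ) → G :=
        Function.extend dec (fun pv => pv.1 pv.2) (fun _ => 1) with hxc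
      have hxcval : ∀ (p : ↥I → G) (v : ↥I), xc ((v : Fin d → ℤ) + u p) = p v := by
        intro p v
        have := hinj.extend_apply (fun pv : (↥I → G) × ↥I => pv.1 pv.2) (fun _ => 1) (p, v)
        simpa [hxc, hdec] using this
      set U : Set ((Fin d → ℤ) → G) :=
        ⋂ (p : ↥I → G), ⋂ (v : ↥I), {z | z ((v : Fin d → ℤ) + u p) = p v} with hU
      set V : Set ((Fin d → ℤ) → G) :=
        ⋂ (p : ↥I → G), ⋂ (v : ↥I), {z | z ((v : Fin d → ℤ) + u p) = 1} with hV
      have hUopen : IsOpen U := isOpen_iInter_of_finite fun p =>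
        isOpen_iInter_of_finite fun v => hopenfib _ _
      have hVopen : IsOpen V := isOpen_iInter_of_finite fun p =>
        isOpen_iInter_of_finite fun v => hopenfib _ _
      have hUne : U.Nonempty := by
        refine ⟨xc, ?_⟩
        simp only [hU, Set.mem_iInter]
        intro p v
        exact hxcval p v
      have hVne : V.Nonempty := by
        refine ⟨1, ?_⟩
        simp only [hV, Set.mem_iInter]
        intro p v
        rfl
      obtain ⟨n, yy, ⟨x', hx'U, rfl⟩, hyV⟩ := htrans U V hUopen hVopen hUne hVne
      refine ⟨n, fun p => ⟨fun v => x' (v + u p), fun v => ?_, fun v => ?_⟩⟩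
      · simp only [hU, Set.mem_iInter] at hx'U
        exact hx'U p v
      · have hsh := hiter_shift n (u p) x'
        rw [hsh]
        simp only [hV, Set.mem_iInter] at hyV
        exact hyV p v
    -- surjectivity of the joint observation map
    have key2 : ∀ I : Finset (Fin d → ℤ), ∃ n : ℕ,
        Function.Surjective (fun x : (Fin d → ℤ) → G =>
          (I.restrict x, I.restrict (F^[n] x))) := by
      intro I
      obtain ⟨n, hn⟩ := key I
      refine ⟨n, ?_⟩
      rintro ⟨p, q⟩
      obtain ⟨x0, hx0⟩ := hres_surj I q
      obtain ⟨w, rfl⟩ := (hsurj.iterate n) x0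
      obtain ⟨z, hz1, hz2⟩ := hn (p * (I.restrict w)⁻¹)
      refine ⟨z * w, ?_⟩
      have h1 : I.restrict (z * w) = p := by
        funext v
        have := hz1 v
        simp only [Pi.mul_apply, Pi.inv_apply, Finset.restrict] at this ⊢
        rw [this]
        group
      have h2 : I.restrict (F^[n] (z * w)) = I.restrict (F^[n] w) := by
        funext v
        rw [hiter_hom n z w]
        simp only [Pi.mul_apply, Finset.restrict]
        rw [hz2 v, one_mul]
      simp only [h1, h2, hx0]
    intro A hA hAdiff
    -- the symmetric difference is null along all iterates
    have hiterdiff : ∀ n : ℕ, μ (symmDiff (F^[n] ⁻¹' A) A) = 0 := by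
      intro n
      induction n with
      | zero => simp
      | succ n ih =>
          have hstep : F^[n+1] ⁻¹' A = F ⁻¹' (F^[n] ⁻¹' A) := by
            rw [Function.iterate_succ]
            rfl
          have hsub1 : symmDiff (F^[n+1] ⁻¹' A) A ⊆
              symmDiff (F^[n+1] ⁻¹' A) (F ⁻¹' A) ∪ symmDiff (F ⁻¹' A) A :=
            symmDiff_triangle _ _ _
          have heq1 : symmDiff (F^[n+1] ⁻¹' A) (F ⁻¹' A) = F ⁻¹' (symmDiff (F^[n] ⁻¹' A) A) := by
            rw [hstep, Set.preimage_symmDiff]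
          have hv1 : μ (F ⁻¹' (symmDiff (F^[n] ⁻¹' A) A)) = 0 := by
            rw [hmp.measure_preimage (hmsd ((hiter_meas n) hA) hA).nullMeasurableSet]
            exact ih
          refine le_antisymm ?_ zero_le
          calc μ (symmDiff (F^[n+1] ⁻¹' A) A)
              ≤ μ (symmDiff (F^[n+1] ⁻¹' A) (F ⁻¹' A)) + μ (symmDiff (F ⁻¹' A) A) :=
                le_trans (measure_mono hsub1) (measure_union_le _ _)
            _ = 0 := by rw [heq1, hv1, hAdiff, add_zero]
    have hAeq : ∀ n : ℕ, μ (F^[n] ⁻¹' A ∩ A) = μ A := by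
      intro n
      refine le_antisymm (measure_mono Set.inter_subset_right) ?_
      calc μ A ≤ μ ((F^[n] ⁻¹' A ∩ A) ∪ symmDiff (F^[n] ⁻¹' A) A) := by
            refine measure_mono ?_
            intro x hx
            by_cases hx' : x ∈ F^[n] ⁻¹' A
            · exact Or.inl ⟨hx', hx⟩
            · exact Or.inr (Set.mem_symmDiff.2 (Or.inr ⟨hx, hx'⟩))
        _ ≤ μ (F^[n] ⁻¹' A ∩ A) + μ (symmDiff (F^[n] ⁻¹' A) A) := measure_union_le _ _
        _ = μ (F^[n] ⁻¹' A ∩ A) := by rw [hiterdiff n, add_zero]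
    -- the main estimate
    have hreal : ∀ ε : ℝ, 0 < ε →
        (μ A).toReal ≤ ((μ A).toReal + ε) * ((μ A).toReal + ε) + 2 * ε := by
      intro ε hε
      obtain ⟨t, htmem, htdiff⟩ := hdense.approx A hA (measure_ne_top μ A) ε hε
      obtain ⟨I, S, -, rfl⟩ := (mem_measurableCylinders t).1 htmem
      obtain ⟨n, hnsurj⟩ := key2 I
      set C : Set ((Fin d → ℤ) → G) := cylinder (α := fun _ : Fin d → ℤ => G) I S with hCdef
      have htm : MeasurableSet C := by
        rw [hCdef, hcyl_eq I S]; exact hcylmeas I 0 S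
      set Sf := (Set.toFinite S).toFinset with hSf
      set c := (Fintype.card (↥I → G) : ℝ≥0∞) with hc
      set k := (Sf.card : ℝ≥0∞) with hk
      have hc0 : c ≠ 0 := by simp [hc, Fintype.card_ne_zero]
      have hcT : c ≠ ⊤ := by simp [hc]
      have hμt : μ C = k * c⁻¹ := by
        rw [hCdef, hcyl_eq I S, cylVal I 0 S]
      -- the pair map
      set ψp : ((Fin d → ℤ) → G) → ((↥I → G) × (↥I → G)) :=
        fun x => (I.restrict x, I.restrict (F^[n] x)) with hψp
      have hpair_hom : ∀ a b : (Fin d → ℤ) → G, ψp (a * b) = ψp a * ψp b := by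
        intro a b
        simp only [hψp]
        rw [Prod.mk_mul_mk, hiter_hom n a b]
        rfl
      have hpair_surj : Function.Surjective ψp := hnsurj
      have hfib0 : ∀ p : ↥I → G,
          MeasurableSet ((fun x : (Fin d → ℤ) → G => I.restrict x) ⁻¹' {p}) := by
        intro p
        have h := hfibm I 0 p
        simpa only [Function.iterate_zero_apply] using h
      have hpair_fib : ∀ pq : (↥I → G) × (↥I → G), MeasurableSet (ψp ⁻¹' {pq}) := by
        intro pq
        have hs : ψp ⁻¹' {pq}
            = ((fun x : (Fin d → ℤ) → G => I.restrict x) ⁻¹' {pq.1})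
              ∩ ((fun x : (Fin d → ℤ) → G => I.restrict (F^[n] x)) ⁻¹' {pq.2}) := by
          ext x
          simp [hψp, Prod.ext_iff]
        rw [hs]
        exact (hfib0 pq.1).inter (hfibm I n pq.2)
      have hset : ψp ⁻¹' ↑(Sf ×ˢ Sf) = (F^[n] ⁻¹' C) ∩ C := by
        ext x
        simp only [hψp, hCdef, Set.mem_preimage, Finset.coe_product, Set.mem_prod, hSf,
          Finset.mem_coe, Set.Finite.mem_toFinset, Set.mem_inter_iff, mem_cylinder]
        exact and_comm
      have hval := stmt10_uniform_fiber μ hinv ψp hpair_hom hpair_surj hpair_fib (Sf ×ˢ Sf)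
      have hμint : μ ((F^[n] ⁻¹' C) ∩ C) = (k * c⁻¹) * (k * c⁻¹) := by
        rw [← hset, hval, Finset.card_product, Fintype.card_prod]
        push_cast
        rw [ENNReal.mul_inv (Or.inl hc0) (Or.inl hcT), mul_mul_mul_comm]
      -- chain of inequalities in ℝ≥0∞
      have hs4 : symmDiff (F^[n] ⁻¹' A) (F^[n] ⁻¹' C)
          = F^[n] ⁻¹' (symmDiff A C) := (Set.preimage_symmDiff A C).symm
      have hs5 : μ (F^[n] ⁻¹' (symmDiff A C)) = μ (symmDiff A C) :=
        (hmp.iterate n).measure_preimage (hmsd hA htm).nullMeasurableSet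
      have hs3 : symmDiff (F^[n] ⁻¹' A ∩ A) (F^[n] ⁻¹' C ∩ C)
          ⊆ symmDiff (F^[n] ⁻¹' A) (F^[n] ⁻¹' C) ∪ symmDiff A C := by
        intro x hx
        simp only [Set.mem_symmDiff, Set.mem_inter_iff, Set.mem_union] at hx ⊢
        tauto
      have hchain : μ A ≤ (k * c⁻¹) * (k * c⁻¹) + 2 * ENNReal.ofReal ε := by
        calc μ A = μ (F^[n] ⁻¹' A ∩ A) := (hAeq n).symm
          _ ≤ μ (F^[n] ⁻¹' C ∩ C)
              + μ (symmDiff (F^[n] ⁻¹' A ∩ A) (F^[n] ⁻¹' C ∩ C)) :=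
            hle_sym _ _
          _ ≤ (k * c⁻¹) * (k * c⁻¹)
              + (μ (symmDiff (F^[n] ⁻¹' A) (F^[n] ⁻¹' C))
                + μ (symmDiff A C)) := by
            rw [hμint]
            exact add_le_add le_rfl (le_trans (measure_mono hs3) (measure_union_le _ _))
          _ ≤ (k * c⁻¹) * (k * c⁻¹) + 2 * ENNReal.ofReal ε := by
            rw [hs4, hs5]
            refine add_le_add le_rfl ?_
            rw [two_mul]
            exact add_le_add htdiff.le htdiff.le
      have hkc : k * c⁻¹ ≤ μ A + ENNReal.ofReal ε := by
        rw [← hμt]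
        refine le_trans (hle_sym C A) ?_
        rw [symmDiff_comm]
        exact add_le_add le_rfl htdiff.le
      have hENN : μ A ≤ (μ A + ENNReal.ofReal ε) * (μ A + ENNReal.ofReal ε)
          + 2 * ENNReal.ofReal ε :=
        le_trans hchain (add_le_add (mul_le_mul' hkc hkc) le_rfl)
      have hfinA : μ A ≠ ⊤ := measure_ne_top μ A
      have hfin1 : μ A + ENNReal.ofReal ε ≠ ⊤ := by
        exact ENNReal.add_ne_top.2 ⟨hfinA, ENNReal.ofReal_ne_top⟩
      have hfinR : (μ A + ENNReal.ofReal ε) * (μ A + ENNReal.ofReal ε)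
          + 2 * ENNReal.ofReal ε ≠ ⊤ := by
        refine ENNReal.add_ne_top.2 ⟨ENNReal.mul_ne_top hfin1 hfin1, ?_⟩
        exact ENNReal.mul_ne_top (by simp) ENNReal.ofReal_ne_top
      have := ENNReal.toReal_mono hfinR hENN
      rw [ENNReal.toReal_add (ENNReal.mul_ne_top hfin1 hfin1)
          (ENNReal.mul_ne_top (by simp) ENNReal.ofReal_ne_top),
        ENNReal.toReal_mul, ENNReal.toReal_mul,
        ENNReal.toReal_add hfinA ENNReal.ofReal_ne_top,
        ENNReal.toReal_ofReal hε.le] at this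
      simpa using this
    -- conclude
    set α := (μ A).toReal with hα
    have hα0 : 0 ≤ α := ENNReal.toReal_nonneg
    have hα1 : α ≤ 1 := by
      have h := prob_le_one (μ := μ) (s := A)
      calc α ≤ (1 : ℝ≥0∞).toReal := ENNReal.toReal_mono ENNReal.one_ne_top h
        _ = 1 := by simp
    have hquad : α ≤ α * α := by
      by_contra hq
      push_neg at hq
      set δ := α - α * α with hδ
      have hδpos : 0 < δ := by simp only [hδ]; linarith
      set ε := min 1 (δ / 6) with hεdef
      have hεpos : 0 < ε := lt_min one_pos (by positivity)
      have h1 : ε ≤ 1 := min_le_left _ _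
      have h2 : ε ≤ δ / 6 := min_le_right _ _
      have hε := hreal ε hεpos
      nlinarith [mul_nonneg (sub_nonneg.2 hα1) hεpos.le,
        mul_nonneg hεpos.le (sub_nonneg.2 h1)]
    have hcases : α = 0 ∨ α = 1 := by
      by_contra hno
      push_neg at hno
      obtain ⟨h0, h1'⟩ := hno
      have hαpos : 0 < α := lt_of_le_of_ne hα0 (Ne.symm h0)
      have hαlt : α < 1 := lt_of_le_of_ne hα1 h1'
      nlinarith
    rcases hcases with h | h
    · left
      have := (ENNReal.toReal_eq_zero_iff (μ A)).1 h
      rcases this with h' | h'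
      · exact h'
      · exact absurd h' (measure_ne_top μ A)
    · right
      have hfinA : μ A ≠ ⊤ := measure_ne_top μ A
      rw [← ENNReal.ofReal_toReal hfinA, ← hα, h]
      simp
  · -- ergodic → transitive
    rintro ⟨hmp, herg⟩ U V hU hV ⟨u0, hu0⟩ ⟨v0, hv0⟩
    set A : Set ((Fin d → ℤ) → G) := ⋃ n : ℕ, F^[n] ⁻¹' V with hAdef
    have hAopen : IsOpen A := isOpen_iUnion fun n => hV.preimage (hiter_cont n)
    have hAmeas : MeasurableSet A := hAopen.measurableSet
    have hsub : F ⁻¹' A ⊆ A := by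
      intro x hx
      simp only [hAdef, Set.mem_preimage, Set.mem_iUnion] at hx ⊢
      obtain ⟨n, hn⟩ := hx
      exact ⟨n + 1, by rwa [Function.iterate_succ_apply]⟩
    have hFA : μ (F ⁻¹' A) = μ A := hmp.measure_preimage hAmeas.nullMeasurableSet
    have hdiff0 : μ (symmDiff (F ⁻¹' A) A) = 0 := by
      have h1 : symmDiff (F ⁻¹' A) A = A \ F ⁻¹' A := by
        rw [Set.symmDiff_def]
        rw [Set.diff_eq_empty.2 hsub]
        simp
      rw [h1]
      rw [measure_diff hsub (hmp.measurable hAmeas).nullMeasurableSet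
        (hFA ▸ measure_ne_top μ A), hFA, tsub_self]
    rcases herg A hAmeas hdiff0 with h0 | h1
    · exfalso
      have hpos : 0 < μ V := hV.measure_pos μ ⟨v0, hv0⟩
      have hVA : V ⊆ A := by
        intro x hx
        simp only [hAdef, Set.mem_iUnion]
        exact ⟨0, by simpa using hx⟩
      have : μ V ≤ μ A := measure_mono hVA
      rw [h0] at this
      exact hpos.ne' (le_antisymm this zero_le)
    · have hUA : (U ∩ A).Nonempty := by
        by_contra hUA
        rw [Set.not_nonempty_iff_eq_empty] at hUA
        have hUsub : U ⊆ Aᶜ := by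
          intro x hx
          intro hxA
          exact Set.eq_empty_iff_forall_notMem.1 hUA x ⟨hx, hxA⟩
        have hposU : 0 < μ U := hU.measure_pos μ ⟨u0, hu0⟩
        have hAc : μ Aᶜ = 0 := by
          rw [measure_compl hAmeas (measure_ne_top μ A), h1, measure_univ, tsub_self]
        have : μ U ≤ μ Aᶜ := measure_mono hUsub
        rw [hAc] at this
        exact hposU.ne' (le_antisymm this zero_le)
      obtain ⟨x, hxU, hxA⟩ := hUA
      obtain ⟨n, hn⟩ := Set.mem_iUnion.1 hxA
      exact ⟨n, F^[n] x, ⟨x, hxU, rfl⟩, hn⟩
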